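/- Let f : ℝ → ℂ be continuous with f(x) = 0 for all x < 0, and let c > 0 be such that x ↦ exp(−c·x)·f(x) is integrable on ℝ. Define the Laplace transform f^L(z) = ∫_{0}^{∞} exp(−z·x)·f(x) dx for Re z > 0, and assume t ↦ f^L(c + i·t) is integrable on ℝ. Then for every x ∈ ℝ: f(x) = (1/(2π))·exp(c·x)·∫_{ℝ} exp(i·t·x)·f^L(c + i·t) dt. -/

import Mathlib

open MeasureTheory

/-- The Laplace transform `f^L(z) = ∫_{0}^{∞} exp(−z·x)·f(x) dx`. -/
noncomputable def laplaceTransform (f : ℝ → ℂ) (z : ℂ) : ℂ :=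
  ∫ x in Set.Ioi (0 : ℝ), Complex.exp (-(z * x)) * f x

open FourierTransform Real Filter in
/-- The Laplace inversion formula: for `f` continuous, vanishing on `(−∞,0)`, with
`exp(−c·x)·f(x)` integrable and `t ↦ f^L(c+it)` integrable,
`f(x) = (1/(2π))·e^{cx}·∫ e^{itx} f^L(c+it) dt`. -/
theorem laplace_inversion (f : ℝ → ℂ) (hf : Continuous f)
    (hsupp : ∀ x < (0 : ℝ), f x = 0) (c : ℝ) (hc : 0 < c)
    (hint : Integrable fun x : ℝ => Complex.exp (-(c * x : ℝ)) * f x)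
    (hint' : Integrable fun t : ℝ => laplaceTransform f (c + t * Complex.I)) :
    ∀ x : ℝ, f x = (1 / (2 * Real.pi) : ℂ) * Real.exp (c * x) *
      ∫ t : ℝ, Complex.exp (t * x * Complex.I) * laplaceTransform f (c + t * Complex.I) := by
  intro x
  set g : ℝ → ℂ := fun y => Complex.exp (-(c * y : ℝ)) * f y with hgdef
  have hπ : (2 * π) ≠ 0 := by positivity
  have hf0 : f 0 = 0 := by
    have h1 : Tendsto f (nhdsWithin 0 (Set.Iio 0)) (nhds (f 0)) :=
      (hf.tendsto 0).mono_left nhdsWithin_le_nhds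
    have h2 : Tendsto f (nhdsWithin 0 (Set.Iio 0)) (nhds 0) := by
      apply Tendsto.congr' _ tendsto_const_nhds
      filter_upwards [self_mem_nhdsWithin] with y hy
      exact (hsupp y hy).symm
    exact tendsto_nhds_unique h1 h2
  have hzero : ∀ y : ℝ, y ≤ 0 → f y = 0 := by
    intro y hy
    rcases lt_or_eq_of_le hy with h | h
    · exact hsupp y h
    · rw [h]; exact hf0
  have key : ∀ t : ℝ, laplaceTransform f (c + t * Complex.I) = 𝓕 g (t / (2 * π)) := by
    intro t
    rw [Real.fourier_real_eq_integral_exp_smul]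
    unfold laplaceTransform
    rw [setIntegral_eq_integral_of_forall_compl_eq_zero (fun v hv => by
      simp only [Set.mem_Ioi, not_lt] at hv
      rw [hzero v hv, mul_zero])]
    apply integral_congr_ae (Filter.Eventually.of_forall ?_)
    intro v
    have harg : (-2 * π * v * (t / (2 * π)) : ℝ) = -(t * v) := by
      field_simp
    rw [harg]
    simp only [smul_eq_mul, hgdef]
    rw [← mul_assoc, ← Complex.exp_add]
    congr 2
    push_cast
    ring
  have hgcont : Continuous g := by
    apply Continuous.mul _ hf
    exact Complex.continuous_exp.comp (by continuity)
  have h𝓕int : Integrable (𝓕 g) := by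
    have h1 : Integrable (fun t : ℝ => 𝓕 g (t * (2 * π)⁻¹)) := by
      apply hint'.congr (Filter.Eventually.of_forall fun t => ?_)
      simpa [div_eq_mul_inv] using key t
    exact (integrable_comp_mul_right_iff (𝓕 g) (inv_ne_zero hπ)).mp h1
  have hinv : 𝓕⁻ (𝓕 g) x = g x :=
    hint.fourierInv_fourier_eq h𝓕int hgcont.continuousAt
  have hinv' : (∫ v : ℝ, Complex.exp (↑(-2 * π * v * (-x)) * Complex.I) • 𝓕 g v) = g x := by
    rw [← Real.fourier_real_eq_integral_exp_smul, ← hinv,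
      Real.fourierInv_eq_fourier_neg]
  set F : ℝ → ℂ := fun t => Complex.exp (t * x * Complex.I) * laplaceTransform f (c + t * Complex.I)
    with hFdef
  have hsub : (∫ s : ℝ, F (2 * π * s)) = |(2 * π)⁻¹| • ∫ t : ℝ, F t :=
    Measure.integral_comp_mul_left F (2 * π)
  have hFval : (∫ s : ℝ, F (2 * π * s)) = g x := by
    rw [← hinv']
    apply integral_congr_ae (Filter.Eventually.of_forall ?_)
    intro s
    simp only [hFdef, key, smul_eq_mul]
    congr 2
    · push_cast; ring
    · congr 1
      field_simp
  have hπabs : |(2 * π)⁻¹| = (2 * π)⁻¹ := abs_of_pos (by positivity)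
  have h2π : ((2 * π : ℝ) : ℂ) ≠ 0 := by exact_mod_cast hπ
  have hIntF : (∫ t : ℝ, F t) = ((2 * π : ℝ) : ℂ) * g x := by
    have := hsub
    rw [hFval, hπabs] at this
    rw [this, Complex.real_smul, ← mul_assoc]
    rw [show ((2 * π : ℝ) : ℂ) * (((2 * π)⁻¹ : ℝ) : ℂ) = 1 by
      rw [← Complex.ofReal_mul, mul_inv_cancel₀ hπ, Complex.ofReal_one]]
    rw [one_mul]
  rw [hIntF]
  simp only [hgdef]
  push_cast
  rw [Complex.exp_neg]
  have he : Complex.exp ((c : ℂ) * x) ≠ 0 := Complex.exp_ne_zero _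
  have hπC : (π : ℂ) ≠ 0 := by exact_mod_cast Real.pi_ne_zero
  field_simp
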